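/- The case k = 2 of the monomial gradient decomposition: for integers n, m ≥ 1 with n + m = N, u^n v^m = (n/N) u^N + (m/N) v^N − d(u,v)(u−v)² for some polynomial d(u,v) of degree N−2 with nonnegative coefficients, for all real u, v. In particular with n = m = 1, d = 1/2. -/
import Mathlib

open Finset

/-- The raw (uncast) coefficient sum identity: the gambler's-ruin weight
`min (m*(j+1)) (n*(N-1-j))` equals a tail sum of the step function `a`. -/
private lemma mgd_coeff_eq (n m N : ℕ) (hn : 1 ≤ n) (hm : 1 ≤ m) (hN : N = n + m)
    (j : ℕ) (hj : j < N - 1) :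
    ((min (m * (j + 1)) (n * (N - 1 - j)) : ℕ) : ℝ)
      = ∑ k ∈ Finset.Ico (j + 1) N, (if k < n then -(m : ℝ) else (n : ℝ)) := by
  rcases le_or_gt (j + 1) n with h | h
  · -- min is m*(j+1)
    have hmin : min (m * (j + 1)) (n * (N - 1 - j)) = m * (j + 1) := by
      apply min_eq_left
      calc m * (j + 1) ≤ m * n := Nat.mul_le_mul_left m h
        _ ≤ n * (N - 1 - j) := by
          rw [mul_comm]
          apply Nat.mul_le_mul_left
          omega
    rw [hmin]
    have hsplit : Finset.Ico (j + 1) N = Finset.Ico (j + 1) n ∪ Finset.Ico n N := by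
      rw [Finset.Ico_union_Ico_eq_Ico h (by omega)]
    rw [hsplit, Finset.sum_union (Finset.Ico_disjoint_Ico_consecutive _ _ _)]
    have h1 : ∑ k ∈ Finset.Ico (j + 1) n, (if k < n then -(m : ℝ) else (n : ℝ))
        = ∑ k ∈ Finset.Ico (j + 1) n, -(m : ℝ) :=
      Finset.sum_congr rfl fun k hk => by
        rw [Finset.mem_Ico] at hk; exact if_pos hk.2
    have h2 : ∑ k ∈ Finset.Ico n N, (if k < n then -(m : ℝ) else (n : ℝ))
        = ∑ k ∈ Finset.Ico n N, (n : ℝ) :=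
      Finset.sum_congr rfl fun k hk => by
        rw [Finset.mem_Ico] at hk; exact if_neg (by omega)
    rw [h1, h2, Finset.sum_const, Finset.sum_const, Nat.card_Ico, Nat.card_Ico]
    have e1 : ((n - (j + 1) : ℕ) : ℝ) = (n : ℝ) - (j + 1) := by
      push_cast [Nat.cast_sub h]; ring
    have e2 : ((N - n : ℕ) : ℝ) = (m : ℝ) := by
      have : N - n = m := by omega
      rw [this]
    rw [nsmul_eq_mul, nsmul_eq_mul, e1, e2]
    push_cast
    ring
  · -- min is n*(N-1-j)
    have hmin : min (m * (j + 1)) (n * (N - 1 - j)) = n * (N - 1 - j) := by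
      apply min_eq_right
      calc n * (N - 1 - j) ≤ n * m := by
            apply Nat.mul_le_mul_left; omega
        _ ≤ m * (j + 1) := by
          rw [mul_comm]
          apply Nat.mul_le_mul_left
          omega
    rw [hmin]
    have h2 : ∑ k ∈ Finset.Ico (j + 1) N, (if k < n then -(m : ℝ) else (n : ℝ))
        = ∑ k ∈ Finset.Ico (j + 1) N, (n : ℝ) :=
      Finset.sum_congr rfl fun k hk => by
        rw [Finset.mem_Ico] at hk; exact if_neg (by omega)
    rw [h2, Finset.sum_const, Nat.card_Ico, nsmul_eq_mul]
    have : N - (j + 1) = N - 1 - j := by omega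
    rw [this]
    push_cast [Nat.cast_sub (show j ≤ N - 1 by omega)]
    ring

/-- The key scalar identity. -/
private lemma mgd_key (n m N : ℕ) (hn : 1 ≤ n) (hm : 1 ≤ m) (hN : N = n + m)
    (u v : ℝ) :
    (∑ j ∈ Finset.range (N - 1),
        ((min (m * (j + 1)) (n * (N - 1 - j)) : ℕ) : ℝ) * (u ^ j * v ^ (N - 2 - j)))
      * (u - v) ^ 2
    = n * u ^ N + m * v ^ N - N * (u ^ n * v ^ m) := by
  set a : ℕ → ℝ := fun k => if k < n then -(m : ℝ) else (n : ℝ) with ha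
  -- Step 1: rewrite the sum as a double sum and swap
  have step1 :
      (∑ j ∈ Finset.range (N - 1),
        ((min (m * (j + 1)) (n * (N - 1 - j)) : ℕ) : ℝ) * (u ^ j * v ^ (N - 2 - j)))
      = ∑ k ∈ Finset.range N,
          a k * ((∑ j ∈ Finset.range k, u ^ j * v ^ (k - 1 - j)) * v ^ (N - 1 - k)) := by
    calc ∑ j ∈ Finset.range (N - 1),
          ((min (m * (j + 1)) (n * (N - 1 - j)) : ℕ) : ℝ) * (u ^ j * v ^ (N - 2 - j))
        = ∑ j ∈ Finset.range (N - 1), ∑ k ∈ Finset.range N,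
            (if j + 1 ≤ k then a k * (u ^ j * v ^ (N - 2 - j)) else 0) := by
          refine Finset.sum_congr rfl fun j hj => ?_
          rw [Finset.mem_range] at hj
          rw [mgd_coeff_eq n m N hn hm hN j hj, Finset.sum_mul]
          rw [← Finset.sum_filter]
          refine Finset.sum_congr ?_ fun k _ => rfl
          ext k
          simp only [Finset.mem_Ico, Finset.mem_filter, Finset.mem_range]
          omega
      _ = ∑ j ∈ Finset.range N, ∑ k ∈ Finset.range N,
            (if j + 1 ≤ k then a k * (u ^ j * v ^ (N - 2 - j)) else 0) := by
          apply Finset.sum_subset (Finset.range_subset_range.2 (by omega))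
          intro j hj hj'
          rw [Finset.mem_range] at hj
          rw [Finset.mem_range] at hj'
          apply Finset.sum_eq_zero
          intro k hk
          rw [Finset.mem_range] at hk
          rw [if_neg (by omega)]
      _ = ∑ k ∈ Finset.range N, ∑ j ∈ Finset.range N,
            (if j + 1 ≤ k then a k * (u ^ j * v ^ (N - 2 - j)) else 0) :=
          Finset.sum_comm
      _ = ∑ k ∈ Finset.range N, ∑ j ∈ Finset.range k,
            a k * (u ^ j * v ^ (N - 2 - j)) := by
          refine Finset.sum_congr rfl fun k hk => ?_
          rw [Finset.mem_range] at hk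
          rw [← Finset.sum_filter]
          refine Finset.sum_congr ?_ fun j _ => rfl
          ext j
          simp only [Finset.mem_filter, Finset.mem_range]
          omega
      _ = ∑ k ∈ Finset.range N,
            a k * ((∑ j ∈ Finset.range k, u ^ j * v ^ (k - 1 - j)) * v ^ (N - 1 - k)) := by
          refine Finset.sum_congr rfl fun k hk => ?_
          rw [Finset.mem_range] at hk
          rw [Finset.sum_mul, Finset.mul_sum]
          refine Finset.sum_congr rfl fun j hj => ?_
          rw [Finset.mem_range] at hj
          have hv : v ^ (N - 2 - j) = v ^ (k - 1 - j) * v ^ (N - 1 - k) := by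
            rw [← pow_add]
            congr 1
            omega
          rw [hv]
          ring
  rw [step1]
  -- Step 2: multiply by (u - v) once
  have step2 :
      (∑ k ∈ Finset.range N,
          a k * ((∑ j ∈ Finset.range k, u ^ j * v ^ (k - 1 - j)) * v ^ (N - 1 - k)))
        * (u - v)
      = ∑ k ∈ Finset.range N, a k * ((u ^ k - v ^ k) * v ^ (N - 1 - k)) := by
    rw [Finset.sum_mul]
    refine Finset.sum_congr rfl fun k hk => ?_
    linear_combination (a k * v ^ (N - 1 - k)) * geom_sum₂_mul u v k
  -- Step 3: split a and expand
  have hsum0 : ∑ k ∈ Finset.range N, a k * (v ^ k * v ^ (N - 1 - k))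
      = v ^ (N - 1) * ∑ k ∈ Finset.range N, a k := by
    rw [Finset.mul_sum]
    refine Finset.sum_congr rfl fun k hk => ?_
    rw [Finset.mem_range] at hk
    rw [← pow_add]
    have : k + (N - 1 - k) = N - 1 := by omega
    rw [this]
    ring
  have haz : ∑ k ∈ Finset.range N, a k = 0 := by
    have hsplit : Finset.range N = Finset.Ico 0 n ∪ Finset.Ico n N := by
      rw [Finset.Ico_union_Ico_eq_Ico (by omega) (by omega), ← Finset.range_eq_Ico]
    rw [hsplit, Finset.sum_union (Finset.Ico_disjoint_Ico_consecutive 0 n N)]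
    have h1 : ∑ k ∈ Finset.Ico 0 n, a k = ∑ k ∈ Finset.Ico 0 n, -(m : ℝ) :=
      Finset.sum_congr rfl fun k hk => by
        rw [Finset.mem_Ico] at hk
        show (if k < n then -(m : ℝ) else (n : ℝ)) = -(m : ℝ)
        exact if_pos hk.2
    have h2 : ∑ k ∈ Finset.Ico n N, a k = ∑ k ∈ Finset.Ico n N, (n : ℝ) :=
      Finset.sum_congr rfl fun k hk => by
        rw [Finset.mem_Ico] at hk
        show (if k < n then -(m : ℝ) else (n : ℝ)) = (n : ℝ)
        exact if_neg (by omega)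
    rw [h1, h2, Finset.sum_const, Finset.sum_const, Nat.card_Ico, Nat.card_Ico]
    have : N - n = m := by omega
    rw [this, nsmul_eq_mul, nsmul_eq_mul, Nat.sub_zero]
    push_cast
    ring
  have step3 :
      ∑ k ∈ Finset.range N, a k * (u ^ k * v ^ (N - 1 - k))
      = (n : ℝ) * ∑ k ∈ Finset.range N, u ^ k * v ^ (N - 1 - k)
        - (N : ℝ) * (v ^ m * ∑ k ∈ Finset.range n, u ^ k * v ^ (n - 1 - k)) := by
    have hcongr : ∀ k ∈ Finset.range N,
        a k * (u ^ k * v ^ (N - 1 - k))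
        = (n : ℝ) * (u ^ k * v ^ (N - 1 - k))
          - (if k < n then (N : ℝ) * (u ^ k * v ^ (N - 1 - k)) else 0) := by
      intro k hk
      show (if k < n then -(m : ℝ) else (n : ℝ)) * _ = _
      by_cases h : k < n
      · simp only [if_pos h]
        have : (N : ℝ) = (n : ℝ) + m := by rw [hN]; push_cast; ring
        rw [this]
        ring
      · simp only [if_neg h]
        ring
    rw [Finset.sum_congr rfl hcongr, Finset.sum_sub_distrib, ← Finset.mul_sum]
    congr 1
    rw [← Finset.sum_filter]
    have hfil : (Finset.range N).filter (· < n) = Finset.range n := by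
      ext k
      simp only [Finset.mem_filter, Finset.mem_range]
      omega
    rw [hfil, Finset.mul_sum, Finset.mul_sum]
    refine Finset.sum_congr rfl fun k hk => ?_
    rw [Finset.mem_range] at hk
    have hv : v ^ (N - 1 - k) = v ^ (n - 1 - k) * v ^ m := by
      rw [← pow_add]
      congr 1
      omega
    rw [hv]
    ring
  have hgN : (∑ k ∈ Finset.range N, u ^ k * v ^ (N - 1 - k)) * (u - v) = u ^ N - v ^ N :=
    geom_sum₂_mul u v N
  have hgn : (∑ k ∈ Finset.range n, u ^ k * v ^ (n - 1 - k)) * (u - v) = u ^ n - v ^ n :=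
    geom_sum₂_mul u v n
  have hvN : v ^ m * v ^ n = v ^ N := by rw [← pow_add]; congr 1; omega
  calc (∑ k ∈ Finset.range N,
          a k * ((∑ j ∈ Finset.range k, u ^ j * v ^ (k - 1 - j)) * v ^ (N - 1 - k)))
        * (u - v) ^ 2
      = ((∑ k ∈ Finset.range N,
          a k * ((∑ j ∈ Finset.range k, u ^ j * v ^ (k - 1 - j)) * v ^ (N - 1 - k)))
        * (u - v)) * (u - v) := by ring
    _ = (∑ k ∈ Finset.range N, a k * ((u ^ k - v ^ k) * v ^ (N - 1 - k))) * (u - v) := by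
        rw [step2]
    _ = ((∑ k ∈ Finset.range N, a k * (u ^ k * v ^ (N - 1 - k)))
          - v ^ (N - 1) * ∑ k ∈ Finset.range N, a k) * (u - v) := by
        rw [← hsum0, ← Finset.sum_sub_distrib]
        congr 1
        refine Finset.sum_congr rfl fun k hk => ?_
        ring
    _ = (∑ k ∈ Finset.range N, a k * (u ^ k * v ^ (N - 1 - k))) * (u - v) := by
        rw [haz]; ring
    _ = ((n : ℝ) * ∑ k ∈ Finset.range N, u ^ k * v ^ (N - 1 - k)
        - (N : ℝ) * (v ^ m * ∑ k ∈ Finset.range n, u ^ k * v ^ (n - 1 - k))) * (u - v) := by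
        rw [step3]
    _ = (n : ℝ) * ((∑ k ∈ Finset.range N, u ^ k * v ^ (N - 1 - k)) * (u - v))
        - (N : ℝ) * v ^ m * ((∑ k ∈ Finset.range n, u ^ k * v ^ (n - 1 - k)) * (u - v)) := by
        ring
    _ = (n : ℝ) * (u ^ N - v ^ N) - (N : ℝ) * v ^ m * (u ^ n - v ^ n) := by
        rw [hgN, hgn]
    _ = n * u ^ N + m * v ^ N - N * (u ^ n * v ^ m) := by
        have hNc : (N : ℝ) = (n : ℝ) + m := by rw [hN]; push_cast; ring
        rw [hNc]
        nlinarith [hvN]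

/-- The two-variable case of the monomial gradient decomposition: for `n, m ≥ 1`,
`N = n + m`, one has `u^n v^m = (n/N) u^N + (m/N) v^N − d(u,v)(u−v)²` for a polynomial
`d` of degree `N−2` with nonnegative coefficients; for `n = m = 1`, `d = 1/2`. -/
theorem monomial_gradient_decomposition_two_vars (n m N : ℕ)
    (hn : 1 ≤ n) (hm : 1 ≤ m) (hN : N = n + m) :
    ∃ d : MvPolynomial (Fin 2) ℝ,
      d.totalDegree ≤ N - 2 ∧
      (∀ μ, 0 ≤ d.coeff μ) ∧
      (∀ u v : ℝ,
        u ^ n * v ^ m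
          = (n / N : ℝ) * u ^ N + (m / N : ℝ) * v ^ N
            - MvPolynomial.eval ![u, v] d * (u - v) ^ 2) ∧
      (n = 1 → m = 1 → d = MvPolynomial.C (1 / 2)) := by
  have hN0 : 0 < N := by omega
  refine ⟨∑ j ∈ Finset.range (N - 1),
      MvPolynomial.monomial (Finsupp.single 0 j + Finsupp.single 1 (N - 2 - j))
        (((min (m * (j + 1)) (n * (N - 1 - j)) : ℕ) : ℝ) / N), ?_, ?_, ?_, ?_⟩
  · -- degree bound
    refine le_trans (MvPolynomial.totalDegree_finset_sum _ _) ?_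
    apply Finset.sup_le
    intro j hj
    rw [Finset.mem_range] at hj
    refine le_trans (MvPolynomial.totalDegree_monomial_le _ _) ?_
    rw [Finsupp.sum_add_index (by simp) (by simp)]
    rw [Finsupp.sum_single_index rfl, Finsupp.sum_single_index rfl]
    simp only [id]
    omega
  · -- nonneg coefficients
    intro μ
    rw [MvPolynomial.coeff_sum]
    apply Finset.sum_nonneg
    intro j hj
    rw [MvPolynomial.coeff_monomial]
    split
    · positivity
    · exact le_refl 0
  · -- main identity
    intro u v
    have heval : MvPolynomial.eval ![u, v]
        (∑ j ∈ Finset.range (N - 1),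
          MvPolynomial.monomial (Finsupp.single 0 j + Finsupp.single 1 (N - 2 - j))
            (((min (m * (j + 1)) (n * (N - 1 - j)) : ℕ) : ℝ) / N))
        = (∑ j ∈ Finset.range (N - 1),
            ((min (m * (j + 1)) (n * (N - 1 - j)) : ℕ) : ℝ) * (u ^ j * v ^ (N - 2 - j))) / N := by
      rw [map_sum, Finset.sum_div]
      refine Finset.sum_congr rfl fun j hj => ?_
      rw [MvPolynomial.eval_monomial]
      rw [Finsupp.prod_add_index' (by intro i; rfl) (fun i e1 e2 => pow_add _ e1 e2)]
      rw [Finsupp.prod_single_index (by rfl), Finsupp.prod_single_index (by rfl)]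
      simp only [Matrix.cons_val_zero, Matrix.cons_val_one, Matrix.head_cons]
      ring
    rw [heval]
    have hkey := mgd_key n m N hn hm hN u v
    have hNne : (N : ℝ) ≠ 0 := Nat.cast_ne_zero.2 (by omega)
    generalize hSg : (∑ j ∈ Finset.range (N - 1),
        ((min (m * (j + 1)) (n * (N - 1 - j)) : ℕ) : ℝ) * (u ^ j * v ^ (N - 2 - j))) = S at hkey ⊢
    field_simp
    linear_combination hkey
  · -- n = m = 1 case
    intro hn1 hm1
    subst hn1 hm1
    subst hN
    rw [show (1 + 1 - 1 : ℕ) = 1 from rfl, Finset.sum_range_one]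
    rw [show (1 + 1 - 2 - 0 : ℕ) = 0 from rfl]
    rw [show Finsupp.single (0 : Fin 2) 0 = 0 from Finsupp.single_zero 0,
        show Finsupp.single (1 : Fin 2) 0 = 0 from Finsupp.single_zero 1, add_zero,
        MvPolynomial.monomial_zero']
    norm_num
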